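/- Fix j, Z = (z_q) and multipliers η_j^{(q)}, q ∈ Ω_j. Suppose α_j⁺ ∈ ℝ^{N_j} satisfies the stationarity equation of the α-subproblem, (ρ|Ω_j| K_j − 2 K_j²) α_j⁺ = Σ_{q∈Ω_j} Φ_jᵀ(ρ z_q − η_j^{(q)}), and define the updated multipliers by η_j^{(q),+} = η_j^{(q)} + ρ(Φ_j α_j⁺ − P_j z_q) for q ∈ Ω_j. Then the dual-feasibility identity 2 K_j² α_j⁺ = Σ_{q∈Ω_j} Φ_jᵀ η_j^{(q),+} holds. -/
import Mathlib


open scoped RealInnerProductSpace BigOperators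

noncomputable section

variable {H : Type*} [NormedAddCommGroup H] [InnerProductSpace ℝ H]

/-- Apply a finite family of vectors to a coefficient vector: `Φ α = ∑ p, α p • Φ p`. -/
def applyFam {n : ℕ} (Φ : Fin n → H) (α : Fin n → ℝ) : H := ∑ p, α p • Φ p

/-- The "transpose" of a family: `Φᵀ w = (⟪Φ p, w⟫)_p`. -/
def famT {n : ℕ} (Φ : Fin n → H) (w : H) : Fin n → ℝ := fun p => ⟪Φ p, w⟫

/-- The Gram matrix of a finite family: `K p q = ⟪Φ p, Φ q⟫`. -/
def gram {n : ℕ} (Φ : Fin n → H) : Matrix (Fin n) (Fin n) ℝ :=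
  Matrix.of fun p q => ⟪Φ p, Φ q⟫

/-- The projection map `P = Φ ∘ K⁻¹ ∘ Φᵀ`. -/
def proj {n : ℕ} (Φ : Fin n → H) (w : H) : H :=
  applyFam Φ ((gram Φ)⁻¹.mulVec (famT Φ w))

/-- Squared Euclidean norm of a coefficient vector. -/
def sqnormVec {n : ℕ} (v : Fin n → ℝ) : ℝ := ∑ p, (v p) ^ 2


lemma famT_add {n : ℕ} (Φ : Fin n → H) (v w : H) :
    famT Φ (v + w) = famT Φ v + famT Φ w := by
  funext p; simp [famT, inner_add_right]

lemma famT_sub {n : ℕ} (Φ : Fin n → H) (v w : H) :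
    famT Φ (v - w) = famT Φ v - famT Φ w := by
  funext p; simp [famT, inner_sub_right]

lemma famT_smul {n : ℕ} (Φ : Fin n → H) (c : ℝ) (w : H) :
    famT Φ (c • w) = c • famT Φ w := by
  funext p; simp [famT, inner_smul_right]

lemma famT_applyFam {n : ℕ} (Φ : Fin n → H) (α : Fin n → ℝ) :
    famT Φ (applyFam Φ α) = (gram Φ).mulVec α := by
  funext p
  simp [famT, applyFam, gram, Matrix.mulVec, dotProduct, inner_sum,
    inner_smul_right, mul_comm]

lemma famT_proj {n : ℕ} (Φ : Fin n → H) (hK : IsUnit (gram Φ)) (w : H) :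
    famT Φ (proj Φ w) = famT Φ w := by
  rw [proj, famT_applyFam, Matrix.mulVec_mulVec,
    Matrix.mul_nonsing_inv _ ((Matrix.isUnit_iff_isUnit_det _).1 hK), Matrix.one_mulVec]

/-- if `α⁺` satisfies the stationarity equation
`(ρ|Ω_j| K_j − 2 K_j²) α⁺ = Σ_{q∈Ω_j} Φ_jᵀ(ρ z_q − η_j^{(q)})` and the multipliers
are updated by `η_j^{(q),+} = η_j^{(q)} + ρ(Φ_j α⁺ − P_j z_q)`, then the
dual-feasibility identity `2 K_j² α⁺ = Σ_{q∈Ω_j} Φ_jᵀ η_j^{(q),+}` holds. -/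
theorem statement_12 {n : ℕ} (Φ : Fin n → H) (hK : IsUnit (gram Φ))
    {ι : Type*} (Ω : Finset ι) (hΩ : Ω.Nonempty) (ρ : ℝ) (hρ : 0 < ρ)
    (z η ηplus : ι → H) (αplus : Fin n → ℝ)
    (hstat : ((ρ * (Ω.card : ℝ)) • gram Φ - (2 : ℝ) • (gram Φ * gram Φ)).mulVec αplus
      = ∑ q ∈ Ω, famT Φ (ρ • z q - η q))
    (hdual : ∀ q ∈ Ω, ηplus q = η q + ρ • (applyFam Φ αplus - proj Φ (z q))) :
    (2 : ℝ) • ((gram Φ * gram Φ).mulVec αplus) = ∑ q ∈ Ω, famT Φ (ηplus q) := by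
  have h1 : ∑ q ∈ Ω, famT Φ (ηplus q)
      = ∑ q ∈ Ω, (famT Φ (η q) + ρ • ((gram Φ).mulVec αplus) - ρ • famT Φ (z q)) := by
    refine Finset.sum_congr rfl fun q hq => ?_
    rw [hdual q hq, famT_add, famT_smul, famT_sub, famT_applyFam, famT_proj Φ hK,
      smul_sub]
    abel
  have h2 : ∑ q ∈ Ω, famT Φ (ρ • z q - η q)
      = ∑ q ∈ Ω, (ρ • famT Φ (z q) - famT Φ (η q)) := by
    refine Finset.sum_congr rfl fun q hq => ?_
    rw [famT_sub, famT_smul]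
  rw [h2] at hstat
  rw [Matrix.sub_mulVec, Matrix.smul_mulVec, Matrix.smul_mulVec] at hstat
  have hcard : ∑ q ∈ Ω, ρ • ((gram Φ).mulVec αplus)
      = (ρ * (Ω.card : ℝ)) • (gram Φ).mulVec αplus := by
    rw [Finset.sum_const, mul_comm, mul_smul, ← Nat.cast_smul_eq_nsmul ℝ]
  rw [h1, Finset.sum_sub_distrib, Finset.sum_add_distrib, hcard]
  rw [Finset.sum_sub_distrib] at hstat
  have := sub_eq_iff_eq_add.mp hstat
  linear_combination (norm := abel) -this


end
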